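/- Let n ≥ 1 and let K be a finite set of points of the integer grid {0, 1, …, n} × {0, 1, …, n}, and let K' = {(8n·x + 1, 8n·y + 1) : (x, y) ∈ K}. Then for every natural number ℓ, K admits a rectilinear Steiner tree of total length at most ℓ if and only if K' admits a rectilinear Steiner tree of total length at most 8n·ℓ. -/

import Mathlib

/-- The integer grid graph: vertices are the points of `ℤ²`, two points being adjacent
iff their `ℓ1`-distance is `1`. -/
def gridGraphZ : SimpleGraph (ℤ × ℤ) where
  Adj p q := |p.1 - q.1| + |p.2 - q.2| = 1
  symm := by
    constructor
    intro p q hpq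
    rwa [abs_sub_comm q.1 p.1, abs_sub_comm q.2 p.2]
  loopless := by
    constructor
    intro p hp
    simp at hp

/-- `K` admits a rectilinear Steiner tree of total length at most `ℓ`: a finite connected
subgraph of the integer grid graph whose vertex set contains `K` and which has at most
`ℓ` edges. -/
def HasRST (K : Set (ℤ × ℤ)) (ℓ : ℕ) : Prop :=
  ∃ H : gridGraphZ.Subgraph, H.verts.Finite ∧ K ⊆ H.verts ∧ H.Connected ∧
    H.edgeSet.Finite ∧ H.edgeSet.ncard ≤ ℓ

namespace RSTaux


lemma ediv_pred (x m : ℤ) (hm : 0 < m) :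
    (x - 1) / m = if m ∣ x then x / m - 1 else x / m := by
  split_ifs with h
  · obtain ⟨k, rfl⟩ := h
    rw [Int.mul_ediv_cancel_left _ hm.ne']
    have : m * k - 1 = (m - 1) + (k - 1) * m := by ring
    rw [this, Int.add_mul_ediv_right _ _ hm.ne', Int.ediv_eq_zero_of_lt (by omega) (by omega)]
    ring
  · have h1 : x % m ≠ 0 := fun hc => h (Int.dvd_of_emod_eq_zero hc)
    have h2 : 0 ≤ x % m := Int.emod_nonneg x hm.ne'
    have h3 : x % m < m := Int.emod_lt_of_pos x hm
    have heq := Int.mul_ediv_add_emod x m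
    have hx : x - 1 = (x % m - 1) + (x / m) * m := by rw [mul_comm]; omega
    rw [hx, Int.add_mul_ediv_right _ _ hm.ne', Int.ediv_eq_zero_of_lt (by omega) (by omega)]
    ring

lemma reach_cast {V : Type*} {G : SimpleGraph V} {a b a' b' : V} (ha : a = a') (hb : b = b')
    (h : G.Reachable a b) : G.Reachable a' b' := ha ▸ hb ▸ h

lemma grid_adj_mk {p q : ℤ × ℤ} (h : |p.1 - q.1| + |p.2 - q.2| = 1) : gridGraphZ.Adj p q := h

lemma grid_adj_iff {p q : ℤ × ℤ} : gridGraphZ.Adj p q ↔ |p.1 - q.1| + |p.2 - q.2| = 1 :=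
  Iff.rfl

lemma reach_right (S : gridGraphZ.Subgraph) (c lo : ℤ) (k : ℕ)
    (hA : ∀ j : ℕ, j < k → S.Adj (lo + j, c) (lo + j + 1, c))
    (h0 : (lo, c) ∈ S.verts) (h1 : (lo + (k : ℤ), c) ∈ S.verts) :
    S.coe.Reachable ⟨(lo, c), h0⟩ ⟨(lo + (k : ℤ), c), h1⟩ := by
  induction k with
  | zero =>
      exact reach_cast rfl (Subtype.ext (by push_cast; ring_nf)) (SimpleGraph.Reachable.refl _)
  | succ k ih =>
      have hk : S.Adj (lo + (k : ℤ), c) (lo + (k : ℤ) + 1, c) := hA k (Nat.lt_succ_self k)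
      have r1 := ih (fun j hj => hA j (hj.trans (Nat.lt_succ_self k))) hk.fst_mem
      have hcoe : S.coe.Adj ⟨_, hk.fst_mem⟩ ⟨_, hk.snd_mem⟩ := hk
      have heq : ((lo + (k : ℤ) + 1, c) : ℤ × ℤ) = (lo + ((k : ℕ) + 1 : ℕ), c) := by
        push_cast; ring_nf
      exact r1.trans (reach_cast rfl (Subtype.ext heq) hcoe.reachable)

lemma reach_up (S : gridGraphZ.Subgraph) (c lo : ℤ) (k : ℕ)
    (hA : ∀ j : ℕ, j < k → S.Adj (c, lo + j) (c, lo + j + 1))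
    (h0 : (c, lo) ∈ S.verts) (h1 : (c, lo + (k : ℤ)) ∈ S.verts) :
    S.coe.Reachable ⟨(c, lo), h0⟩ ⟨(c, lo + (k : ℤ)), h1⟩ := by
  induction k with
  | zero =>
      exact reach_cast rfl (Subtype.ext (by push_cast; ring_nf)) (SimpleGraph.Reachable.refl _)
  | succ k ih =>
      have hk : S.Adj (c, lo + (k : ℤ)) (c, lo + (k : ℤ) + 1) := hA k (Nat.lt_succ_self k)
      have r1 := ih (fun j hj => hA j (hj.trans (Nat.lt_succ_self k))) hk.fst_mem
      have hcoe : S.coe.Adj ⟨_, hk.fst_mem⟩ ⟨_, hk.snd_mem⟩ := hk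
      have heq : ((c, lo + (k : ℤ) + 1) : ℤ × ℤ) = (c, lo + ((k : ℕ) + 1 : ℕ)) := by
        push_cast; ring_nf
      exact r1.trans (reach_cast rfl (Subtype.ext heq) hcoe.reachable)




def box (P Q : ℤ × ℤ) : Set (ℤ × ℤ) :=
  {p | min P.1 Q.1 ≤ p.1 ∧ p.1 ≤ max P.1 Q.1 ∧ min P.2 Q.2 ≤ p.2 ∧ p.2 ≤ max P.2 Q.2}

lemma box_comm (P Q : ℤ × ℤ) : box P Q = box Q P := by
  unfold box; rw [min_comm, max_comm, min_comm P.2, max_comm P.2]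

lemma left_mem_box (P Q : ℤ × ℤ) : P ∈ box P Q :=
  ⟨min_le_left _ _, le_max_left _ _, min_le_left _ _, le_max_left _ _⟩

lemma right_mem_box (P Q : ℤ × ℤ) : Q ∈ box P Q :=
  ⟨min_le_right _ _, le_max_right _ _, min_le_right _ _, le_max_right _ _⟩

section boxreach

variable (S : gridGraphZ.Subgraph) (P Q : ℤ × ℤ)

lemma box_mem_verts (hline : P.1 = Q.1 ∨ P.2 = Q.2) (hne : P ≠ Q)
    (hadj : ∀ p q, p ∈ box P Q → q ∈ box P Q → gridGraphZ.Adj p q → S.Adj p q)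
    {p : ℤ × ℤ} (hp : p ∈ box P Q) : p ∈ S.verts := by
  obtain ⟨x, y⟩ := p
  obtain ⟨h1, h2, h3, h4⟩ := hp
  rcases hline with h | h
  · -- vertical: first coords equal
    simp only [h, min_self, max_self] at h1 h2
    have hlo : min P.2 Q.2 < max P.2 Q.2 := by
      rcases lt_or_ge P.2 Q.2 with hh | hh
      · rw [min_eq_left hh.le, max_eq_right hh.le]; exact hh
      · have : Q.2 ≠ P.2 := fun hc => hne (Prod.ext h.symm hc).symm
        rw [min_eq_right hh, max_eq_left hh]; omega
    rcases lt_or_ge y (max P.2 Q.2) with hy | hy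
    · have hA : S.Adj (x, y) (x, y + 1) := by
        refine hadj _ _ ⟨by omega, by omega, h3, h4⟩ ⟨by omega, by omega, by omega, by omega⟩ ?_
        show |x - x| + |y - (y + 1)| = 1
        have e1 : x - x = 0 := by ring
        have e2 : y - (y + 1) = -1 := by ring
        rw [e1, e2]; norm_num
      exact hA.fst_mem
    · have hA : S.Adj (x, y) (x, y - 1) := by
        refine hadj _ _ ⟨by omega, by omega, h3, h4⟩ ⟨by omega, by omega, by omega, by omega⟩ ?_
        show |x - x| + |y - (y - 1)| = 1
        have e1 : x - x = 0 := by ring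
        have e2 : y - (y - 1) = 1 := by ring
        rw [e1, e2]; norm_num
      exact hA.fst_mem
  · -- horizontal: second coords equal
    simp only [h, min_self, max_self] at h3 h4
    have hlo : min P.1 Q.1 < max P.1 Q.1 := by
      rcases lt_or_ge P.1 Q.1 with hh | hh
      · rw [min_eq_left hh.le, max_eq_right hh.le]; exact hh
      · have : Q.1 ≠ P.1 := fun hc => hne (Prod.ext hc.symm h)
        rw [min_eq_right hh, max_eq_left hh]; omega
    rcases lt_or_ge x (max P.1 Q.1) with hx | hx
    · have hA : S.Adj (x, y) (x + 1, y) := by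
        refine hadj _ _ ⟨h1, h2, by omega, by omega⟩ ⟨by omega, by omega, by omega, by omega⟩ ?_
        show |x - (x + 1)| + |y - y| = 1
        have e1 : x - (x + 1) = -1 := by ring
        have e2 : y - y = 0 := by ring
        rw [e1, e2]; norm_num
      exact hA.fst_mem
    · have hA : S.Adj (x, y) (x - 1, y) := by
        refine hadj _ _ ⟨h1, h2, by omega, by omega⟩ ⟨by omega, by omega, by omega, by omega⟩ ?_
        show |x - (x - 1)| + |y - y| = 1
        have e1 : x - (x - 1) = 1 := by ring
        have e2 : y - y = 0 := by ring
        rw [e1, e2]; norm_num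
      exact hA.fst_mem

lemma reach_box (hline : P.1 = Q.1 ∨ P.2 = Q.2) (hne : P ≠ Q)
    (hadj : ∀ p q, p ∈ box P Q → q ∈ box P Q → gridGraphZ.Adj p q → S.Adj p q)
    {p q : ℤ × ℤ} (hp : p ∈ box P Q) (hq : q ∈ box P Q)
    (hp' : p ∈ S.verts) (hq' : q ∈ S.verts) :
    S.coe.Reachable ⟨p, hp'⟩ ⟨q, hq'⟩ := by
  have memv : ∀ {r : ℤ × ℤ}, r ∈ box P Q → r ∈ S.verts :=
    fun hr => box_mem_verts S P Q hline hne hadj hr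
  rcases hline with h | h
  · -- vertical line
    have key : ∀ r : ℤ × ℤ, (hr : r ∈ box P Q) → ∀ (hr' : r ∈ S.verts)
        (h0 : (P.1, min P.2 Q.2) ∈ S.verts),
        S.coe.Reachable ⟨(P.1, min P.2 Q.2), h0⟩ ⟨r, hr'⟩ := by
      intro r hr hr' h0
      obtain ⟨h1, h2, h3, h4⟩ := hr
      have h1' : r.1 = P.1 := by omega
      have hrc : r = (P.1, min P.2 Q.2 + (((r.2 - min P.2 Q.2).toNat : ℕ) : ℤ)) := by
        have : (((r.2 - min P.2 Q.2).toNat : ℤ)) = r.2 - min P.2 Q.2 :=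
          Int.toNat_of_nonneg (by omega)
        exact Prod.ext (by omega) (by omega)
      have h1'' : ((P.1, min P.2 Q.2 + (((r.2 - min P.2 Q.2).toNat : ℕ) : ℤ)) : ℤ × ℤ)
          ∈ S.verts := by rw [← hrc]; exact hr'
      refine reach_cast rfl (Subtype.ext hrc.symm)
        (reach_up S P.1 (min P.2 Q.2) (r.2 - min P.2 Q.2).toNat ?_ h0 h1'')
      intro j hj
      have hj' : (j : ℤ) < r.2 - min P.2 Q.2 := by omega
      refine hadj _ _ ⟨by omega, by omega, by omega, by omega⟩
        ⟨by omega, by omega, by omega, by omega⟩ ?_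
      show |P.1 - P.1| + |min P.2 Q.2 + (j : ℤ) - (min P.2 Q.2 + (j : ℤ) + 1)| = 1
      have e1 : P.1 - P.1 = 0 := by ring
      have e2 : min P.2 Q.2 + (j : ℤ) - (min P.2 Q.2 + (j : ℤ) + 1) = -1 := by ring
      rw [e1, e2]; norm_num
    have h0 : ((P.1, min P.2 Q.2) : ℤ × ℤ) ∈ S.verts :=
      memv ⟨by omega, by omega, by omega, by omega⟩
    exact (key p hp hp' h0).symm.trans (key q hq hq' h0)
  · -- horizontal line
    have key : ∀ r : ℤ × ℤ, (hr : r ∈ box P Q) → ∀ (hr' : r ∈ S.verts)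
        (h0 : (min P.1 Q.1, P.2) ∈ S.verts),
        S.coe.Reachable ⟨(min P.1 Q.1, P.2), h0⟩ ⟨r, hr'⟩ := by
      intro r hr hr' h0
      obtain ⟨h1, h2, h3, h4⟩ := hr
      have h3' : r.2 = P.2 := by omega
      have hrc : r = (min P.1 Q.1 + (((r.1 - min P.1 Q.1).toNat : ℕ) : ℤ), P.2) := by
        have : (((r.1 - min P.1 Q.1).toNat : ℤ)) = r.1 - min P.1 Q.1 :=
          Int.toNat_of_nonneg (by omega)
        exact Prod.ext (by omega) (by omega)
      have h1'' : ((min P.1 Q.1 + (((r.1 - min P.1 Q.1).toNat : ℕ) : ℤ), P.2) : ℤ × ℤ)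
          ∈ S.verts := by rw [← hrc]; exact hr'
      refine reach_cast rfl (Subtype.ext hrc.symm)
        (reach_right S P.2 (min P.1 Q.1) (r.1 - min P.1 Q.1).toNat ?_ h0 h1'')
      intro j hj
      have hj' : (j : ℤ) < r.1 - min P.1 Q.1 := by omega
      refine hadj _ _ ⟨by omega, by omega, by omega, by omega⟩
        ⟨by omega, by omega, by omega, by omega⟩ ?_
      show |min P.1 Q.1 + (j : ℤ) - (min P.1 Q.1 + (j : ℤ) + 1)| + |P.2 - P.2| = 1
      have e1 : P.2 - P.2 = 0 := by ring
      have e2 : min P.1 Q.1 + (j : ℤ) - (min P.1 Q.1 + (j : ℤ) + 1) = -1 := by ring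
      rw [e1, e2]; norm_num
    have h0 : ((min P.1 Q.1, P.2) : ℤ × ℤ) ∈ S.verts :=
      memv ⟨by omega, by omega, by omega, by omega⟩
    exact (key p hp hp' h0).symm.trans (key q hq hq' h0)

end boxreach




lemma grid_adj_elim {p q : ℤ × ℤ} (h : gridGraphZ.Adj p q) :
    (p.1 = q.1 ∧ (p.2 = q.2 + 1 ∨ q.2 = p.2 + 1)) ∨
      (p.2 = q.2 ∧ (p.1 = q.1 + 1 ∨ q.1 = p.1 + 1)) := by
  have h' : |p.1 - q.1| + |p.2 - q.2| = 1 := h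
  rcases abs_cases (p.1 - q.1) with ⟨e1, _⟩ | ⟨e1, _⟩ <;>
    rcases abs_cases (p.2 - q.2) with ⟨e2, _⟩ | ⟨e2, _⟩ <;> omega

lemma reach_lift (S T : gridGraphZ.Subgraph) (f : ℤ × ℤ → ℤ × ℤ)
    (hmem : ∀ v ∈ S.verts, f v ∈ T.verts)
    (hstep : ∀ u v, S.Adj u v → ∀ (hu : f u ∈ T.verts) (hv : f v ∈ T.verts),
      T.coe.Reachable ⟨f u, hu⟩ ⟨f v, hv⟩)
    {x y : S.verts} (h : S.coe.Reachable x y) :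
    T.coe.Reachable ⟨f x.1, hmem _ x.2⟩ ⟨f y.1, hmem _ y.2⟩ := by
  obtain ⟨w⟩ := h
  induction w with
  | nil => exact SimpleGraph.Reachable.refl _
  | @cons a b cdum h' w ih =>
      exact (hstep a.1 b.1 h' (hmem _ a.2) (hmem _ b.2)).trans ih

/-- Image subgraph under a map contracting edges to points or edges. -/
def mapSub (S : gridGraphZ.Subgraph) (f : ℤ × ℤ → ℤ × ℤ) : gridGraphZ.Subgraph where
  verts := f '' S.verts
  Adj P Q := gridGraphZ.Adj P Q ∧ ∃ u v, S.Adj u v ∧ f u = P ∧ f v = Q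
  adj_sub h := h.1
  edge_vert h := by
    obtain ⟨hg, u, v, huv, rfl, _⟩ := h
    exact ⟨u, huv.fst_mem, rfl⟩
  symm := ⟨fun P Q ⟨hg, u, v, h, hu, hv⟩ => ⟨hg.symm, v, u, h.symm, hv, hu⟩⟩

lemma mapSub_connected (S : gridGraphZ.Subgraph) (f : ℤ × ℤ → ℤ × ℤ)
    (hf : ∀ u v, S.Adj u v → f u = f v ∨ gridGraphZ.Adj (f u) (f v))
    (hS : S.Connected) : (mapSub S f).Connected := by
  rw [SimpleGraph.Subgraph.connected_iff]
  constructor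
  · rw [SimpleGraph.Subgraph.preconnected_iff]
    rintro ⟨P, u, hu, rfl⟩ ⟨Q, v, hv, rfl⟩
    have hmem : ∀ w ∈ S.verts, f w ∈ (mapSub S f).verts := fun w hw => ⟨w, hw, rfl⟩
    have hreach : S.coe.Reachable ⟨u, hu⟩ ⟨v, hv⟩ :=
      (SimpleGraph.Subgraph.preconnected_iff.mp hS.preconnected) _ _
    exact reach_lift S (mapSub S f) f hmem (fun a b hab ha hb => by
      rcases hf a b hab with heq | hadj
      · exact reach_cast rfl (Subtype.ext heq) (SimpleGraph.Reachable.refl _)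
      · exact SimpleGraph.Adj.reachable
          (show (mapSub S f).coe.Adj ⟨f a, ha⟩ ⟨f b, hb⟩ from ⟨hadj, a, b, hab, rfl, rfl⟩))
      hreach
  · obtain ⟨v, hv⟩ := hS.nonempty
    exact ⟨f v, v, hv, rfl⟩

lemma mapSub_edgeSet_subset (S : gridGraphZ.Subgraph) (f : ℤ × ℤ → ℤ × ℤ) :
    (mapSub S f).edgeSet ⊆
      Sym2.map f '' {e ∈ S.edgeSet | ¬ (Sym2.map f e).IsDiag} := by
  intro e he
  induction e using Sym2.ind with
  | _ P Q =>
    obtain ⟨hg, u, v, huv, rfl, rfl⟩ := he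
    refine ⟨s(u, v), ⟨huv, ?_⟩, Sym2.map_pair_eq f u v⟩
    rw [Sym2.map_pair_eq, Sym2.mk_isDiag_iff]
    exact hg.ne

lemma exists_of_mem_edgeSet (S : gridGraphZ.Subgraph) (e : Sym2 (ℤ × ℤ))
    (he : e ∈ S.edgeSet) : ∃ u v, e = s(u, v) ∧ S.Adj u v := by
  induction e using Sym2.ind with
  | _ u v => exact ⟨u, v, rfl, he⟩

lemma ncard_subset_biUnion_le {α β : Type*} (F : Finset β) (T : β → Set α) (k : ℕ)
    (hT : ∀ s ∈ F, (T s).Finite) (hk : ∀ s ∈ F, (T s).ncard ≤ k) :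
    ∀ (A : Set α), A ⊆ (⋃ s ∈ F, T s) → A.ncard ≤ F.card * k := by
  classical
  induction F using Finset.induction_on with
  | empty => intro A hA; simp only [Finset.notMem_empty, Set.iUnion_of_empty,
      Set.iUnion_empty] at hA; simp [Set.subset_empty_iff.mp (by simpa using hA)]
  | insert s F' hnotmem ih =>
    intro A hA
    have hsplit : A ⊆ (A ∩ T s) ∪ (A \ T s) := by
      intro x hx; by_cases h : x ∈ T s
      · exact Or.inl ⟨hx, h⟩
      · exact Or.inr ⟨hx, h⟩
    have h1 : (A ∩ T s).ncard ≤ k :=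
      le_trans (Set.ncard_le_ncard Set.inter_subset_right
        (hT s (Finset.mem_insert_self s F'))) (hk s (Finset.mem_insert_self s F'))
    have h2 : (A \ T s).ncard ≤ F'.card * k := by
      refine ih (fun u hu => hT u (Finset.mem_insert_of_mem hu))
        (fun u hu => hk u (Finset.mem_insert_of_mem hu)) _ ?_
      intro x hx
      have := hA hx.1
      simp only [Finset.mem_insert, Set.mem_iUnion, exists_prop] at this ⊢
      obtain ⟨u, hu | hu, hxu⟩ := this
      · exact absurd (hu ▸ hxu) hx.2
      · exact ⟨u, hu, hxu⟩
    calc A.ncard = ((A ∩ T s) ∪ (A \ T s)).ncard := by rw [Set.inter_union_diff]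
      _ ≤ (A ∩ T s).ncard + (A \ T s).ncard := Set.ncard_union_le _ _
      _ ≤ k + F'.card * k := add_le_add h1 h2
      _ = (insert s F').card * k := by rw [Finset.card_insert_of_notMem hnotmem]; ring




lemma box_finite (P Q : ℤ × ℤ) : (box P Q).Finite := by
  refine Set.Finite.subset (Set.finite_Icc ((min P.1 Q.1, min P.2 Q.2) : ℤ × ℤ)
    ((max P.1 Q.1, max P.2 Q.2) : ℤ × ℤ)) ?_
  rintro ⟨x, y⟩ ⟨h1, h2, h3, h4⟩
  rw [Set.mem_Icc]
  exact ⟨⟨h1, h3⟩, ⟨h2, h4⟩⟩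

lemma ncard_Icc_int (a b : ℤ) : (Set.Icc a b).ncard = (b + 1 - a).toNat := by
  rw [← Finset.coe_Icc, Set.ncard_coe_finset, Int.card_Icc]

lemma forward (M : ℕ) (hM : 1 ≤ M) (K : Set (ℤ × ℤ)) (ℓ : ℕ) (h : HasRST K ℓ) :
    HasRST ((fun p : ℤ × ℤ => ((M : ℤ) * p.1 + 1, (M : ℤ) * p.2 + 1)) '' K) (M * ℓ) := by
  classical
  obtain ⟨H, hVfin, hKsub, hconn, hEfin, hEcard⟩ := h
  set m : ℤ := (M : ℤ) with hm
  have hm0 : 0 < m := by omega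
  set φ : ℤ × ℤ → ℤ × ℤ := fun a => (m * a.1 + 1, m * a.2 + 1) with hφ
  have hφ1 : ∀ a, (φ a).1 = m * a.1 + 1 := fun a => rfl
  have hφ2 : ∀ a, (φ a).2 = m * a.2 + 1 := fun a => rfl
  set H2 : gridGraphZ.Subgraph :=
    { verts := (φ '' H.verts) ∪ {p | ∃ a b, H.Adj a b ∧ p ∈ box (φ a) (φ b)}
      Adj := fun p q => gridGraphZ.Adj p q ∧
        ∃ a b, H.Adj a b ∧ p ∈ box (φ a) (φ b) ∧ q ∈ box (φ a) (φ b)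
      adj_sub := fun h => h.1
      edge_vert := fun h => Or.inr ⟨h.2.choose, h.2.choose_spec.choose,
        h.2.choose_spec.choose_spec.1, h.2.choose_spec.choose_spec.2.1⟩
      symm := ⟨fun p q h => ⟨h.1.symm, h.2.choose, h.2.choose_spec.choose,
        h.2.choose_spec.choose_spec.1, h.2.choose_spec.choose_spec.2.2,
        h.2.choose_spec.choose_spec.2.1⟩⟩ } with hH2
  have hAdjIff : ∀ p q, H2.Adj p q ↔ (gridGraphZ.Adj p q ∧
      ∃ a b, H.Adj a b ∧ p ∈ box (φ a) (φ b) ∧ q ∈ box (φ a) (φ b)) := fun p q => Iff.rfl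
  have hvertsIff : H2.verts = (φ '' H.verts) ∪ {p | ∃ a b, H.Adj a b ∧ p ∈ box (φ a) (φ b)} := rfl
  have hline : ∀ a b : ℤ × ℤ, H.Adj a b → (φ a).1 = (φ b).1 ∨ (φ a).2 = (φ b).2 := by
    intro a b hab
    rcases grid_adj_elim (hab.adj_sub) with ⟨h1, _⟩ | ⟨h1, _⟩
    · exact Or.inl (by rw [hφ1, hφ1, h1])
    · exact Or.inr (by rw [hφ2, hφ2, h1])
  have hneφ : ∀ a b : ℤ × ℤ, H.Adj a b → φ a ≠ φ b := by
    intro a b hab hc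
    have h1 : m * a.1 + 1 = m * b.1 + 1 := congrArg Prod.fst hc
    have h2 : m * a.2 + 1 = m * b.2 + 1 := congrArg Prod.snd hc
    have ha1 : a.1 = b.1 := by
      have := mul_left_cancel₀ hm0.ne' (by omega : m * a.1 = m * b.1); exact this
    have ha2 : a.2 = b.2 := by
      have := mul_left_cancel₀ hm0.ne' (by omega : m * a.2 = m * b.2); exact this
    exact (hab.adj_sub).ne (Prod.ext ha1 ha2)
  have hadj_box : ∀ a b : ℤ × ℤ, H.Adj a b → ∀ p q, p ∈ box (φ a) (φ b) →
      q ∈ box (φ a) (φ b) → gridGraphZ.Adj p q → H2.Adj p q :=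
    fun a b hab p q hp hq hg => ⟨hg, a, b, hab, hp, hq⟩
  have hφmem : ∀ a ∈ H.verts, φ a ∈ H2.verts := fun a ha => Or.inl ⟨a, ha, rfl⟩
  -- vertex finiteness
  have hV2fin : H2.verts.Finite := by
    refine Set.Finite.union (hVfin.image φ) (Set.Finite.subset
      (Set.Finite.biUnion hVfin (fun a _ => Set.Finite.biUnion hVfin
        (fun b _ => box_finite (φ a) (φ b)))) ?_)
    rintro p ⟨a, b, hab, hp⟩
    simp only [Set.mem_iUnion, exists_prop]
    exact ⟨a, hab.fst_mem, b, hab.snd_mem, hp⟩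
  -- K' inside verts
  have hK2 : (fun p : ℤ × ℤ => ((M : ℤ) * p.1 + 1, (M : ℤ) * p.2 + 1)) '' K ⊆ H2.verts := by
    rintro _ ⟨p, hp, rfl⟩
    exact hφmem p (hKsub hp)
  -- connectivity
  have hconn2 : H2.Connected := by
    rw [SimpleGraph.Subgraph.connected_iff]
    constructor
    · rw [SimpleGraph.Subgraph.preconnected_iff]
      have claim1 : ∀ p (hp : p ∈ H2.verts), ∃ a, ∃ ha : a ∈ H.verts,
          H2.coe.Reachable ⟨p, hp⟩ ⟨φ a, hφmem a ha⟩ := by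
        rintro p (⟨a, ha, rfl⟩ | ⟨a, b, hab, hpbox⟩)
        · exact ⟨a, ha, SimpleGraph.Reachable.refl _⟩
        · refine ⟨a, hab.fst_mem, reach_box H2 (φ a) (φ b) (hline a b hab)
            (hneφ a b hab) (hadj_box a b hab) hpbox (left_mem_box _ _) _
            (hφmem a hab.fst_mem)⟩
      have claim2 : ∀ a b (ha : a ∈ H.verts) (hb : b ∈ H.verts),
          H2.coe.Reachable ⟨φ a, hφmem a ha⟩ ⟨φ b, hφmem b hb⟩ := by
        intro a b ha hb
        have hreach : H.coe.Reachable ⟨a, ha⟩ ⟨b, hb⟩ :=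
          (SimpleGraph.Subgraph.preconnected_iff.mp hconn.preconnected) _ _
        exact reach_lift H H2 φ hφmem (fun u v huv hu hv =>
          reach_box H2 (φ u) (φ v) (hline u v huv) (hneφ u v huv) (hadj_box u v huv)
            (left_mem_box _ _) (right_mem_box _ _) hu hv) hreach
      rintro ⟨p, hp⟩ ⟨q, hq⟩
      obtain ⟨a, ha, r1⟩ := claim1 p hp
      obtain ⟨b, hb, r2⟩ := claim1 q hq
      exact r1.trans ((claim2 a b ha hb).trans r2.symm)
    · obtain ⟨v, hv⟩ := hconn.nonempty
      exact ⟨φ v, hφmem v hv⟩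
  -- edge counting
  set F : Finset (Sym2 (ℤ × ℤ)) := hEfin.toFinset with hF
  set bS : Sym2 (ℤ × ℤ) → Set (ℤ × ℤ) :=
    Sym2.lift ⟨fun a b => box (φ a) (φ b), fun a b => box_comm (φ a) (φ b)⟩ with hbS
  set TS : Sym2 (ℤ × ℤ) → Set (Sym2 (ℤ × ℤ)) :=
    fun s => {e | (∀ p ∈ e, p ∈ bS s) ∧ e ∈ gridGraphZ.edgeSet} with hTS
  have hsub : H2.edgeSet ⊆ ⋃ s ∈ F, TS s := by
    intro e he
    induction e using Sym2.ind with
    | _ p q =>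
      rw [SimpleGraph.Subgraph.mem_edgeSet] at he
      obtain ⟨hg, a, b, hab, hp, hq⟩ := he
      simp only [Set.mem_iUnion, exists_prop]
      refine ⟨s(a, b), ?_, ?_, ?_⟩
      · rw [hF, Set.Finite.mem_toFinset]; exact SimpleGraph.Subgraph.mem_edgeSet.mpr hab
      · intro r hr
        rw [Sym2.mem_iff] at hr
        rcases hr with rfl | rfl <;> rw [hbS] <;> simp only [Sym2.lift_mk]
        · exact hp
        · exact hq
      · exact hg
  have hTSgood : ∀ s ∈ F, (TS s).Finite ∧ (TS s).ncard ≤ M := by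
    intro s hs
    rw [hF, Set.Finite.mem_toFinset] at hs
    obtain ⟨a, b, rfl, hab⟩ := exists_of_mem_edgeSet H s hs
    have hbSab : bS s(a, b) = box (φ a) (φ b) := by rw [hbS]; simp only [Sym2.lift_mk]
    rcases grid_adj_elim (hab.adj_sub) with ⟨h1, h2⟩ | ⟨h1, h2⟩
    · -- vertical : a.1 = b.1
      -- vertical segment: a.1 = b.1
      have key : ∀ (C lo : ℤ), (∀ p ∈ box (φ a) (φ b),
            p.1 = C ∧ lo ≤ p.2 ∧ p.2 ≤ lo + m) →
          TS s(a, b) ⊆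
            (fun y : ℤ => s(((C, y) : ℤ × ℤ), ((C, y + 1) : ℤ × ℤ))) ''
              Set.Icc lo (lo + m - 1) := by
        intro C lo hbox e he
        induction e using Sym2.ind with
        | _ p q =>
          obtain ⟨hmem, hgrid⟩ := he
          rw [hbSab] at hmem
          obtain ⟨hp1, hp2, hp3⟩ := hbox p (hmem p (Sym2.mem_mk_left p q))
          obtain ⟨hq1, hq2, hq3⟩ := hbox q (hmem q (Sym2.mem_mk_right p q))
          rw [SimpleGraph.mem_edgeSet] at hgrid
          rcases grid_adj_elim hgrid with ⟨e1, e2 | e2⟩ | ⟨e1, e2⟩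
          · -- p.2 = q.2 + 1 : edge from q upward
            refine ⟨q.2, Set.mem_Icc.mpr ⟨by omega, by omega⟩, ?_⟩
            show s(((C, q.2) : ℤ × ℤ), ((C, q.2 + 1) : ℤ × ℤ)) = s(p, q)
            rw [show ((C, q.2) : ℤ × ℤ) = q from Prod.ext (by omega) rfl,
              show ((C, q.2 + 1) : ℤ × ℤ) = p from Prod.ext (by omega) (by omega)]
            exact Sym2.eq_swap
          · -- q.2 = p.2 + 1 : edge from p upward
            refine ⟨p.2, Set.mem_Icc.mpr ⟨by omega, by omega⟩, ?_⟩
            show s(((C, p.2) : ℤ × ℤ), ((C, p.2 + 1) : ℤ × ℤ)) = s(p, q)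
            rw [show ((C, p.2) : ℤ × ℤ) = p from Prod.ext (by omega) rfl,
              show ((C, p.2 + 1) : ℤ × ℤ) = q from Prod.ext (by omega) (by omega)]
          · exact absurd rfl (by omega : ¬ (0 : ℤ) = 0)
      have hboxy : ∀ p ∈ box (φ a) (φ b), p.1 = m * a.1 + 1 ∧
          min (m * a.2 + 1) (m * b.2 + 1) ≤ p.2 ∧
          p.2 ≤ min (m * a.2 + 1) (m * b.2 + 1) + m := by
        rintro p ⟨hp1, hp2, hp3, hp4⟩
        simp only [hφ1, hφ2, h1, min_self, max_self] at hp1 hp2 hp3 hp4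
        have hmeq : m * a.1 = m * b.1 ∨ m * a.2 = m * b.2 := by
          first
          | exact Or.inl (by rw [h1])
          | exact Or.inr (by rw [h1])
        rcases hmeq with hmeq | hmeq <;> rcases h2 with h2 | h2 <;>
          [ (have hma : m * a.2 = m * b.2 + m := by rw [h2]; ring);
            (have hma : m * b.2 = m * a.2 + m := by rw [h2]; ring);
            (have hma : m * a.2 = m * b.2 + m := by rw [h2]; ring);
            (have hma : m * b.2 = m * a.2 + m := by rw [h2]; ring)] <;>
          exact ⟨by omega, by omega, by omega⟩
      have hsubIcc := key (m * a.1 + 1) (min (m * a.2 + 1) (m * b.2 + 1)) hboxy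
      have hfinImg : ((fun y : ℤ => s(((m * a.1 + 1, y) : ℤ × ℤ),
          ((m * a.1 + 1, y + 1) : ℤ × ℤ))) ''
          Set.Icc (min (m * a.2 + 1) (m * b.2 + 1))
            (min (m * a.2 + 1) (m * b.2 + 1) + m - 1)).Finite :=
        (Set.finite_Icc _ _).image _
      refine ⟨Set.Finite.subset hfinImg hsubIcc, ?_⟩
      calc (TS s(a, b)).ncard ≤ _ := Set.ncard_le_ncard hsubIcc hfinImg
        _ ≤ (Set.Icc (min (m * a.2 + 1) (m * b.2 + 1))
              (min (m * a.2 + 1) (m * b.2 + 1) + m - 1)).ncard :=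
            Set.ncard_image_le (Set.finite_Icc _ _)
        _ = M := by rw [ncard_Icc_int]; omega
    · -- horizontal segment : a.2 = b.2
      have key : ∀ (C lo : ℤ), (∀ p ∈ box (φ a) (φ b),
            p.2 = C ∧ lo ≤ p.1 ∧ p.1 ≤ lo + m) →
          TS s(a, b) ⊆
            (fun x : ℤ => s(((x, C) : ℤ × ℤ), ((x + 1, C) : ℤ × ℤ))) ''
              Set.Icc lo (lo + m - 1) := by
        intro C lo hbox e he
        induction e using Sym2.ind with
        | _ p q =>
          obtain ⟨hmem, hgrid⟩ := he
          rw [hbSab] at hmem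
          obtain ⟨hp1, hp2, hp3⟩ := hbox p (hmem p (Sym2.mem_mk_left p q))
          obtain ⟨hq1, hq2, hq3⟩ := hbox q (hmem q (Sym2.mem_mk_right p q))
          rw [SimpleGraph.mem_edgeSet] at hgrid
          rcases grid_adj_elim hgrid with ⟨e1, e2⟩ | ⟨e1, e2 | e2⟩
          · exact absurd rfl (by omega : ¬ (0 : ℤ) = 0)
          · refine ⟨q.1, Set.mem_Icc.mpr ⟨by omega, by omega⟩, ?_⟩
            show s(((q.1, C) : ℤ × ℤ), ((q.1 + 1, C) : ℤ × ℤ)) = s(p, q)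
            rw [show ((q.1, C) : ℤ × ℤ) = q from Prod.ext rfl (by omega),
              show ((q.1 + 1, C) : ℤ × ℤ) = p from Prod.ext (by omega) (by omega)]
            exact Sym2.eq_swap
          · refine ⟨p.1, Set.mem_Icc.mpr ⟨by omega, by omega⟩, ?_⟩
            show s(((p.1, C) : ℤ × ℤ), ((p.1 + 1, C) : ℤ × ℤ)) = s(p, q)
            rw [show ((p.1, C) : ℤ × ℤ) = p from Prod.ext rfl (by omega),
              show ((p.1 + 1, C) : ℤ × ℤ) = q from Prod.ext (by omega) (by omega)]
      have hboxy : ∀ p ∈ box (φ a) (φ b), p.2 = m * a.2 + 1 ∧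
          min (m * a.1 + 1) (m * b.1 + 1) ≤ p.1 ∧
          p.1 ≤ min (m * a.1 + 1) (m * b.1 + 1) + m := by
        rintro p ⟨hp1, hp2, hp3, hp4⟩
        simp only [hφ1, hφ2, h1, min_self, max_self] at hp1 hp2 hp3 hp4
        have hmeq : m * a.1 = m * b.1 ∨ m * a.2 = m * b.2 := by
          first
          | exact Or.inl (by rw [h1])
          | exact Or.inr (by rw [h1])
        rcases hmeq with hmeq | hmeq <;> rcases h2 with h2 | h2 <;>
          [ (have hma : m * a.1 = m * b.1 + m := by rw [h2]; ring);
            (have hma : m * b.1 = m * a.1 + m := by rw [h2]; ring);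
            (have hma : m * a.1 = m * b.1 + m := by rw [h2]; ring);
            (have hma : m * b.1 = m * a.1 + m := by rw [h2]; ring)] <;>
          exact ⟨by omega, by omega, by omega⟩
      have hsubIcc := key (m * a.2 + 1) (min (m * a.1 + 1) (m * b.1 + 1)) hboxy
      have hfinImg : ((fun x : ℤ => s(((x, m * a.2 + 1) : ℤ × ℤ),
          ((x + 1, m * a.2 + 1) : ℤ × ℤ))) ''
          Set.Icc (min (m * a.1 + 1) (m * b.1 + 1))
            (min (m * a.1 + 1) (m * b.1 + 1) + m - 1)).Finite :=
        (Set.finite_Icc _ _).image _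
      refine ⟨Set.Finite.subset hfinImg hsubIcc, ?_⟩
      calc (TS s(a, b)).ncard ≤ _ := Set.ncard_le_ncard hsubIcc hfinImg
        _ ≤ (Set.Icc (min (m * a.1 + 1) (m * b.1 + 1))
              (min (m * a.1 + 1) (m * b.1 + 1) + m - 1)).ncard :=
            Set.ncard_image_le (Set.finite_Icc _ _)
        _ = M := by rw [ncard_Icc_int]; omega
  have hE2fin : H2.edgeSet.Finite :=
    Set.Finite.subset (Set.Finite.biUnion F.finite_toSet
      (fun s hs => (hTSgood s hs).1)) hsub
  refine ⟨H2, hV2fin, hK2, hconn2, hE2fin, ?_⟩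
  have hcount := ncard_subset_biUnion_le F TS M (fun s hs => (hTSgood s hs).1)
    (fun s hs => (hTSgood s hs).2) _ hsub
  have hFcard : F.card ≤ ℓ := by
    rw [hF, ← Set.ncard_eq_toFinset_card _ hEfin]
    exact hEcard
  calc H2.edgeSet.ncard ≤ F.card * M := hcount
    _ ≤ ℓ * M := Nat.mul_le_mul_right M hFcard
    _ = M * ℓ := Nat.mul_comm _ _




lemma grid_adj_intro {p q : ℤ × ℤ}
    (h : (p.1 = q.1 ∧ (p.2 = q.2 + 1 ∨ q.2 = p.2 + 1)) ∨
      (p.2 = q.2 ∧ (p.1 = q.1 + 1 ∨ q.1 = p.1 + 1))) : gridGraphZ.Adj p q := by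
  show |p.1 - q.1| + |p.2 - q.2| = 1
  rcases abs_cases (p.1 - q.1) with ⟨e1, _⟩ | ⟨e1, _⟩ <;>
    rcases abs_cases (p.2 - q.2) with ⟨e2, _⟩ | ⟨e2, _⟩ <;> omega

lemma reverse (M : ℕ) (hM : 1 ≤ M) (K : Set (ℤ × ℤ)) (ℓ : ℕ)
    (h : HasRST ((fun p : ℤ × ℤ => ((M : ℤ) * p.1 + 1, (M : ℤ) * p.2 + 1)) '' K) (M * ℓ)) :
    HasRST K ℓ := by
  classical
  obtain ⟨H', hVfin, hKsub, hconn, hEfin, hEcard⟩ := h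
  set m : ℤ := (M : ℤ) with hm
  have hm0 : 0 < m := by omega
  set ψ : ℕ → (ℤ × ℤ) → ℤ × ℤ :=
    fun t p => ((p.1 - 1 + (t : ℤ)) / m, (p.2 - 1 + (t : ℤ)) / m) with hψ
  -- one-dimensional step lemma
  have hstep1 : ∀ c t : ℤ, ((c + 1) - 1 + t) / m
      = (c - 1 + t) / m + (if m ∣ c + t then 1 else 0) := by
    intro c t
    have h1 : (c + 1) - 1 + t = c + t := by ring
    have h2 : c - 1 + t = (c + t) - 1 := by ring
    rw [h1, h2, ediv_pred (c + t) m hm0]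
    split_ifs <;> ring
  -- Lipschitz property
  have hlip : ∀ (t : ℕ) (u v : ℤ × ℤ), gridGraphZ.Adj u v →
      ψ t u = ψ t v ∨ gridGraphZ.Adj (ψ t u) (ψ t v) := by
    intro t u v huv
    have hc1 : (ψ t u).1 = (u.1 - 1 + (t : ℤ)) / m := rfl
    have hc2 : (ψ t u).2 = (u.2 - 1 + (t : ℤ)) / m := rfl
    have hd1 : (ψ t v).1 = (v.1 - 1 + (t : ℤ)) / m := rfl
    have hd2 : (ψ t v).2 = (v.2 - 1 + (t : ℤ)) / m := rfl
    rcases grid_adj_elim huv with ⟨h1, h2 | h2⟩ | ⟨h1, h2 | h2⟩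
    · -- u.1 = v.1, u.2 = v.2 + 1
      have e1 : (u.1 - 1 + (t : ℤ)) / m = (v.1 - 1 + (t : ℤ)) / m := by rw [h1]
      have e2 := hstep1 v.2 (t : ℤ)
      rw [← h2] at e2
      by_cases hd : m ∣ v.2 + (t : ℤ)
      · rw [if_pos hd] at e2
        exact Or.inr (grid_adj_intro (Or.inl ⟨by rw [hc1, hd1, e1],
          Or.inl (by rw [hc2, hd2]; omega)⟩))
      · rw [if_neg hd] at e2
        exact Or.inl (Prod.ext (by rw [hc1, hd1, e1]) (by rw [hc2, hd2]; omega))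
    · -- u.1 = v.1, v.2 = u.2 + 1
      have e1 : (u.1 - 1 + (t : ℤ)) / m = (v.1 - 1 + (t : ℤ)) / m := by rw [h1]
      have e2 := hstep1 u.2 (t : ℤ)
      rw [← h2] at e2
      by_cases hd : m ∣ u.2 + (t : ℤ)
      · rw [if_pos hd] at e2
        exact Or.inr (grid_adj_intro (Or.inl ⟨by rw [hc1, hd1, e1],
          Or.inr (by rw [hc2, hd2]; omega)⟩))
      · rw [if_neg hd] at e2
        exact Or.inl (Prod.ext (by rw [hc1, hd1, e1]) (by rw [hc2, hd2]; omega))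
    · -- u.2 = v.2, u.1 = v.1 + 1
      have e1 : (u.2 - 1 + (t : ℤ)) / m = (v.2 - 1 + (t : ℤ)) / m := by rw [h1]
      have e2 := hstep1 v.1 (t : ℤ)
      rw [← h2] at e2
      by_cases hd : m ∣ v.1 + (t : ℤ)
      · rw [if_pos hd] at e2
        exact Or.inr (grid_adj_intro (Or.inr ⟨by rw [hc2, hd2, e1],
          Or.inl (by rw [hc1, hd1]; omega)⟩))
      · rw [if_neg hd] at e2
        exact Or.inl (Prod.ext (by rw [hc1, hd1]; omega) (by rw [hc2, hd2, e1]))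
    · -- u.2 = v.2, v.1 = u.1 + 1
      have e1 : (u.2 - 1 + (t : ℤ)) / m = (v.2 - 1 + (t : ℤ)) / m := by rw [h1]
      have e2 := hstep1 u.1 (t : ℤ)
      rw [← h2] at e2
      by_cases hd : m ∣ u.1 + (t : ℤ)
      · rw [if_pos hd] at e2
        exact Or.inr (grid_adj_intro (Or.inr ⟨by rw [hc2, hd2, e1],
          Or.inr (by rw [hc1, hd1]; omega)⟩))
      · rw [if_neg hd] at e2
        exact Or.inl (Prod.ext (by rw [hc1, hd1]; omega) (by rw [hc2, hd2, e1]))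
  -- ψ is a retraction of φ
  have hpsiphi : ∀ t : ℕ, t < M → ∀ p : ℤ × ℤ,
      ψ t (((M : ℤ) * p.1 + 1, (M : ℤ) * p.2 + 1) : ℤ × ℤ) = p := by
    intro t ht p
    have key : ∀ x : ℤ, ((m * x + 1) - 1 + (t : ℤ)) / m = x := by
      intro x
      have h1 : (m * x + 1) - 1 + (t : ℤ) = (t : ℤ) + x * m := by ring
      rw [h1, Int.add_mul_ediv_right _ _ hm0.ne',
        Int.ediv_eq_zero_of_lt (by omega) (by omega)]
      ring
    exact Prod.ext (key p.1) (key p.2)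
  -- the divisibility uniqueness
  have hdvd_unique : ∀ c t : ℤ, 0 ≤ t → t < m → ((m ∣ c + t) ↔ t = (-c) % m) := by
    intro c t h0 h1
    constructor
    · intro hd
      have h2 : (c + t) % m = 0 := Int.emod_eq_zero_of_dvd hd
      have h3 : -c = t - (c + t) := by ring
      rw [h3, Int.sub_emod, h2, sub_zero, Int.emod_emod_of_dvd _ dvd_rfl,
        Int.emod_eq_of_lt h0 h1]
    · rintro rfl
      apply Int.dvd_of_emod_eq_zero
      rw [Int.add_emod, Int.emod_emod_of_dvd _ dvd_rfl, ← Int.add_emod]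
      simp
  -- crossing predicate
  set P : ℕ → Sym2 (ℤ × ℤ) → Prop := fun t e => ¬ (Sym2.map (ψ t) e).IsDiag with hP
  set F' : Finset (Sym2 (ℤ × ℤ)) := hEfin.toFinset with hF'
  have hcross_card : ∀ e ∈ F', ((Finset.range M).filter (fun t => P t e)).card = 1 := by
    intro e he
    rw [hF', Set.Finite.mem_toFinset] at he
    obtain ⟨u, v, rfl, huv⟩ := exists_of_mem_edgeSet H' e he
    have hPiff : ∀ t : ℕ, P t s(u, v) ↔ ψ t u ≠ ψ t v := by
      intro t
      rw [hP]
      simp only [Sym2.map_pair_eq, Sym2.mk_isDiag_iff]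
    -- find the coordinate
    have hmain : ∃ c : ℤ, ∀ t : ℕ, P t s(u, v) ↔ m ∣ c + (t : ℤ) := by
      rcases grid_adj_elim huv.adj_sub with ⟨h1, h2 | h2⟩ | ⟨h1, h2 | h2⟩
      · refine ⟨v.2, fun t => (hPiff t).trans ?_⟩
        have e1 : (u.1 - 1 + (t : ℤ)) / m = (v.1 - 1 + (t : ℤ)) / m := by rw [h1]
        have e2 := hstep1 v.2 (t : ℤ)
        rw [← h2] at e2
        constructor
        · intro hne
          by_contra hd
          rw [if_neg hd] at e2
          refine hne (Prod.ext e1 ?_)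
          show (u.2 - 1 + (t : ℤ)) / m = (v.2 - 1 + (t : ℤ)) / m
          omega
        · intro hd hc
          rw [if_pos hd] at e2
          have : (u.2 - 1 + (t : ℤ)) / m = (v.2 - 1 + (t : ℤ)) / m := congrArg Prod.snd hc
          omega
      · refine ⟨u.2, fun t => (hPiff t).trans ?_⟩
        have e1 : (u.1 - 1 + (t : ℤ)) / m = (v.1 - 1 + (t : ℤ)) / m := by rw [h1]
        have e2 := hstep1 u.2 (t : ℤ)
        rw [← h2] at e2
        constructor
        · intro hne
          by_contra hd
          rw [if_neg hd] at e2
          refine hne (Prod.ext e1 ?_)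
          show (u.2 - 1 + (t : ℤ)) / m = (v.2 - 1 + (t : ℤ)) / m
          omega
        · intro hd hc
          rw [if_pos hd] at e2
          have : (u.2 - 1 + (t : ℤ)) / m = (v.2 - 1 + (t : ℤ)) / m := congrArg Prod.snd hc
          omega
      · refine ⟨v.1, fun t => (hPiff t).trans ?_⟩
        have e1 : (u.2 - 1 + (t : ℤ)) / m = (v.2 - 1 + (t : ℤ)) / m := by rw [h1]
        have e2 := hstep1 v.1 (t : ℤ)
        rw [← h2] at e2
        constructor
        · intro hne
          by_contra hd
          rw [if_neg hd] at e2
          refine hne (Prod.ext ?_ e1)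
          show (u.1 - 1 + (t : ℤ)) / m = (v.1 - 1 + (t : ℤ)) / m
          omega
        · intro hd hc
          rw [if_pos hd] at e2
          have : (u.1 - 1 + (t : ℤ)) / m = (v.1 - 1 + (t : ℤ)) / m := congrArg Prod.fst hc
          omega
      · refine ⟨u.1, fun t => (hPiff t).trans ?_⟩
        have e1 : (u.2 - 1 + (t : ℤ)) / m = (v.2 - 1 + (t : ℤ)) / m := by rw [h1]
        have e2 := hstep1 u.1 (t : ℤ)
        rw [← h2] at e2
        constructor
        · intro hne
          by_contra hd
          rw [if_neg hd] at e2
          refine hne (Prod.ext ?_ e1)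
          show (u.1 - 1 + (t : ℤ)) / m = (v.1 - 1 + (t : ℤ)) / m
          omega
        · intro hd hc
          rw [if_pos hd] at e2
          have : (u.1 - 1 + (t : ℤ)) / m = (v.1 - 1 + (t : ℤ)) / m := congrArg Prod.fst hc
          omega
    obtain ⟨c, hc⟩ := hmain
    have hfilter : (Finset.range M).filter (fun t => P t s(u, v)) = {((-c) % m).toNat} := by
      ext t
      simp only [Finset.mem_filter, Finset.mem_range, Finset.mem_singleton]
      constructor
      · rintro ⟨htM, hPt⟩
        have := (hdvd_unique c (t : ℤ) (by omega) (by omega)).mp ((hc t).mp hPt)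
        omega
      · intro ht
        have hmod0 : 0 ≤ (-c) % m := Int.emod_nonneg _ hm0.ne'
        have hmod1 : (-c) % m < m := Int.emod_lt_of_pos _ hm0
        have htM : t < M := by omega
        refine ⟨htM, (hc t).mpr ((hdvd_unique c (t : ℤ) (by omega) (by omega)).mpr (by omega))⟩
    rw [hfilter, Finset.card_singleton]
  -- sum identity
  have hsum : ∑ t ∈ Finset.range M, (F'.filter (fun e => P t e)).card = F'.card := by
    simp only [Finset.card_filter]
    rw [Finset.sum_comm]
    rw [Finset.sum_congr rfl (fun e he => by
      rw [← Finset.card_filter, hcross_card e he])]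
    simp
  have hcard_le : F'.card ≤ M * ℓ := by
    rw [hF', ← Set.ncard_eq_toFinset_card _ hEfin]
    exact hEcard
  -- pigeonhole
  have hpigeon : ∃ t ∈ Finset.range M, (F'.filter (fun e => P t e)).card ≤ ℓ := by
    by_contra hcon
    push_neg at hcon
    have hge : ∀ t ∈ Finset.range M, ℓ + 1 ≤ (F'.filter (fun e => P t e)).card :=
      fun t ht => hcon t ht
    have : M * (ℓ + 1) ≤ ∑ t ∈ Finset.range M, (F'.filter (fun e => P t e)).card := by
      calc M * (ℓ + 1) = ∑ _t ∈ Finset.range M, (ℓ + 1) := by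
            rw [Finset.sum_const, Finset.card_range, smul_eq_mul]
        _ ≤ _ := Finset.sum_le_sum hge
    rw [hsum, Nat.mul_add, Nat.mul_one] at this
    omega
  obtain ⟨t, htM, hcard⟩ := hpigeon
  rw [Finset.mem_range] at htM
  -- build the subgraph
  refine ⟨mapSub H' (ψ t), hVfin.image _, ?_, mapSub_connected H' (ψ t) (fun u v huv => hlip t u v huv.adj_sub) hconn, ?_, ?_⟩
  · intro p hp
    exact ⟨((M : ℤ) * p.1 + 1, (M : ℤ) * p.2 + 1), hKsub ⟨p, hp, rfl⟩, hpsiphi t htM p⟩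
  · refine Set.Finite.subset (Set.Finite.image _ ?_) (mapSub_edgeSet_subset H' (ψ t))
    exact hEfin.subset (Set.sep_subset _ _)
  · have hCrossFin : ({e ∈ H'.edgeSet | ¬ (Sym2.map (ψ t) e).IsDiag}).Finite :=
      hEfin.subset (Set.sep_subset _ _)
    have h1 : (mapSub H' (ψ t)).edgeSet.ncard ≤
        (Sym2.map (ψ t) '' {e ∈ H'.edgeSet | ¬ (Sym2.map (ψ t) e).IsDiag}).ncard :=
      Set.ncard_le_ncard (mapSub_edgeSet_subset H' (ψ t)) (hCrossFin.image _)
    have h2 : (Sym2.map (ψ t) '' {e ∈ H'.edgeSet | ¬ (Sym2.map (ψ t) e).IsDiag}).ncard ≤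
        ({e ∈ H'.edgeSet | ¬ (Sym2.map (ψ t) e).IsDiag}).ncard :=
      Set.ncard_image_le hCrossFin
    have h3 : {e ∈ H'.edgeSet | ¬ (Sym2.map (ψ t) e).IsDiag} =
        ↑(F'.filter (fun e => P t e)) := by
      ext e
      simp only [Set.mem_setOf_eq, Finset.coe_filter, hF', Set.Finite.mem_toFinset, hP]
    have h4 : ({e ∈ H'.edgeSet | ¬ (Sym2.map (ψ t) e).IsDiag}).ncard =
        (F'.filter (fun e => P t e)).card := by
      rw [h3, Set.ncard_coe_finset]
    omega


end RSTaux

/-- For `K` a finite point set inside the grid `{0,…,n}²` and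
`K' = {(8n·x + 1, 8n·y + 1) : (x, y) ∈ K}`, `K` admits a rectilinear Steiner tree of
length at most `ℓ` iff `K'` admits one of length at most `8nℓ`. -/
theorem stmt12 (n : ℕ) (hn : 1 ≤ n) (K : Finset (ℤ × ℤ))
    (hK : ∀ p ∈ K, 0 ≤ p.1 ∧ p.1 ≤ (n : ℤ) ∧ 0 ≤ p.2 ∧ p.2 ≤ (n : ℤ)) (ℓ : ℕ) :
    HasRST (K : Set (ℤ × ℤ)) ℓ ↔
      HasRST ((fun p : ℤ × ℤ => (8 * (n : ℤ) * p.1 + 1, 8 * (n : ℤ) * p.2 + 1)) '' K)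
        (8 * n * ℓ) := by
  have hfun : (fun p : ℤ × ℤ => (8 * (n : ℤ) * p.1 + 1, 8 * (n : ℤ) * p.2 + 1)) =
      (fun p : ℤ × ℤ => (((8 * n : ℕ) : ℤ) * p.1 + 1, ((8 * n : ℕ) : ℤ) * p.2 + 1)) := by
    funext p
    push_cast
    rfl
  rw [hfun]
  exact ⟨fun h => RSTaux.forward (8 * n) (by omega) _ ℓ h,
    fun h => RSTaux.reverse (8 * n) (by omega) _ ℓ h⟩
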